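/- Let (X_n) be iid copies of X ~ S_p(μ, Σ, α), 0 < α < 2, with Σ_{kk} > 0 for some k, and let s₁, s₂ be distinct positive reals. Then the estimator α̂_s(k) = log(log|φ̂_n(s₁e_k)| / log|φ̂_n(s₂e_k)|) / log(s₁/s₂) converges almost surely to α. -/

import Mathlib

open Matrix MeasureTheory ProbabilityTheory Filter

theorem stmt_16 {Ω : Type*} [MeasurableSpace Ω] (μ : Measure Ω) [IsProbabilityMeasure μ]
    {p : ℕ} (μv : Fin p → ℝ) (S : Matrix (Fin p) (Fin p) ℝ) (hS : S.PosSemidef)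
    (α : ℝ) (hα : 0 < α) (hα2 : α < 2)
    (k : Fin p) (hkk : 0 < S k k)
    (s₁ s₂ : ℝ) (hs₁ : 0 < s₁) (hs₂ : 0 < s₂) (hne : s₁ ≠ s₂)
    (X : ℕ → Ω → Fin p → ℝ) (hX : ∀ n, Measurable (X n))
    (hindep : iIndepFun X μ)
    (hident : ∀ n, IdentDistrib (X n) (X 0) μ μ)
    (hφ : ∀ t : Fin p → ℝ,
      (∫ ω, Complex.exp (Complex.I * ((t ⬝ᵥ X 0 ω : ℝ) : ℂ)) ∂μ)
        = Complex.exp (Complex.I * ((t ⬝ᵥ μv : ℝ) : ℂ)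
            - ((((1 / 2 : ℝ) * (t ⬝ᵥ S.mulVec t)) ^ (α / 2) : ℝ) : ℂ))) :
    ∀ᵐ ω ∂μ, Tendsto
      (fun n : ℕ =>
        Real.log
          (Real.log (‖(n : ℂ)⁻¹ * ∑ j ∈ Finset.range n,
              Complex.exp (Complex.I * (((s₁ • (Pi.single k 1 : Fin p → ℝ)) ⬝ᵥ X j ω : ℝ) : ℂ))‖)
            / Real.log (‖(n : ℂ)⁻¹ * ∑ j ∈ Finset.range n,
              Complex.exp (Complex.I * (((s₂ • (Pi.single k 1 : Fin p → ℝ)) ⬝ᵥ X j ω : ℝ) : ℂ))‖))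
          / Real.log (s₁ / s₂))
      atTop (nhds α) := by
  have dot2 : ∀ s : ℝ, ((s • (Pi.single k 1 : Fin p → ℝ)) ⬝ᵥ
      S.mulVec (s • (Pi.single k 1 : Fin p → ℝ))) = s ^ 2 * S k k := by
    intro s
    simp [dotProduct, Matrix.mulVec, Pi.single_apply, mul_ite, ite_mul, Finset.mul_sum]
    ring
  set c : ℝ → ℝ := fun s => ((1 / 2 : ℝ) * (s ^ 2 * S k k)) ^ (α / 2) with hcdef
  have hcpos : ∀ s : ℝ, 0 < s → 0 < c s := fun s hs =>
    Real.rpow_pos_of_pos (by positivity) _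
  have key : ∀ s : ℝ, 0 < s → ∀ᵐ ω ∂μ,
      Tendsto (fun n : ℕ => ‖(n : ℂ)⁻¹ * ∑ j ∈ Finset.range n,
        Complex.exp (Complex.I * (((s • (Pi.single k 1 : Fin p → ℝ)) ⬝ᵥ X j ω : ℝ) : ℂ))‖)
        atTop (nhds (Real.exp (-(c s)))) := by
    intro s hs
    set t : Fin p → ℝ := s • (Pi.single k 1 : Fin p → ℝ) with ht
    set g : (Fin p → ℝ) → ℂ := fun v => Complex.exp (Complex.I * ((t ⬝ᵥ v : ℝ) : ℂ)) with hg
    have gm : Measurable g := by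
      apply Complex.measurable_exp.comp
      apply Measurable.const_mul
      exact Complex.measurable_ofReal.comp
        (Finset.measurable_sum _ (fun i _ => measurable_const.mul (measurable_pi_apply i)))
    have hnorm : ∀ (j : ℕ) (ω : Ω), ‖g (X j ω)‖ = 1 := by
      intro j ω
      simp [hg, Complex.norm_exp]
    have hint0 : Integrable (g ∘ X 0) μ := by
      refine Integrable.mono' (integrable_const 1) ((gm.comp (hX 0)).aestronglyMeasurable) ?_
      filter_upwards with ω using le_of_eq (hnorm 0 ω)
    have sl := strong_law_ae (fun j => g ∘ X j) hint0
      (fun i j hij => (hindep.indepFun hij).comp gm gm)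
      (fun i => (hident i).comp gm)
    have hmean : (μ[g ∘ X 0]) = Complex.exp (Complex.I * ((t ⬝ᵥ μv : ℝ) : ℂ)
        - ((((1 / 2 : ℝ) * (t ⬝ᵥ S.mulVec t)) ^ (α / 2) : ℝ) : ℂ)) := hφ t
    rw [hmean] at sl
    filter_upwards [sl] with ω hω
    have habs : Tendsto (fun n : ℕ => ‖(n : ℝ)⁻¹ • ∑ j ∈ Finset.range n, (g ∘ X j) ω‖)
        atTop (nhds (‖Complex.exp (Complex.I * ((t ⬝ᵥ μv : ℝ) : ℂ)
          - ((((1 / 2 : ℝ) * (t ⬝ᵥ S.mulVec t)) ^ (α / 2) : ℝ) : ℂ))‖)) :=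
      (continuous_norm.tendsto _).comp hω
    have heq : ‖Complex.exp (Complex.I * ((t ⬝ᵥ μv : ℝ) : ℂ)
        - ((((1 / 2 : ℝ) * (t ⬝ᵥ S.mulVec t)) ^ (α / 2) : ℝ) : ℂ))‖ = Real.exp (-(c s)) := by
      rw [Complex.norm_exp]
      congr 1
      simp [Complex.sub_re, Complex.mul_re, hcdef, dot2 s]
      rw [ht, dot2 s]
    rw [heq] at habs
    convert habs using 2 with n
    simp only [Function.comp_apply, hg, ht]
    congr 1
    rw [Complex.real_smul]
    push_cast
    ring
  filter_upwards [key s₁ hs₁, key s₂ hs₂] with ω h1 h2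
  have l1 := (h1.log (Real.exp_pos _).ne')
  have l2 := (h2.log (Real.exp_pos _).ne')
  rw [Real.log_exp] at l1 l2
  have hratio := l1.div l2 (by simpa using (hcpos s₂ hs₂).ne')
  rw [neg_div_neg_eq] at hratio
  have hlog := hratio.log (by positivity)
  have hfin := hlog.div_const (Real.log (s₁ / s₂))
  have hval : Real.log (c s₁ / c s₂) / Real.log (s₁ / s₂) = α := by
    have hL : Real.log (s₁ / s₂) ≠ 0 := by
      have h1 : s₁ / s₂ ≠ 1 := by
        intro h
        exact hne (by field_simp at h; linarith)
      rcases lt_or_gt_of_ne h1 with h | h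
      · exact (Real.log_neg (by positivity) h).ne
      · exact (Real.log_pos h).ne'
    have hc12 : c s₁ / c s₂ = (s₁ / s₂) ^ α := by
      rw [hcdef]
      rw [← Real.div_rpow (by positivity) (by positivity)]
      have : (1 / 2 : ℝ) * (s₁ ^ 2 * S k k) / ((1 / 2 : ℝ) * (s₂ ^ 2 * S k k))
          = (s₁ / s₂) ^ (2 : ℕ) := by
        field_simp
      rw [this, ← Real.rpow_natCast (s₁ / s₂) 2, ← Real.rpow_mul (by positivity)]
      congr 1
      push_cast
      ring
    rw [hc12, Real.log_rpow (by positivity), mul_div_assoc, div_self hL, mul_one]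
  rw [← hval]
  exact hfin
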